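/- For any positive reals c_1, ..., c_n, the integral of exp(-c_1 y_1 - ... - c_n y_n) over the region {0 < y_1 < y_2 < ... < y_n} ⊂ ℝ^n equals 1/[c_n · (c_n + c_{n-1}) · ... · (c_n + c_{n-1} + ... + c_1)], i.e., the product over j = 1, ..., n of 1/(Σ_{i=j}^{n} c_i). -/

import Mathlib

open MeasureTheory Finset

section aux

variable {n : ℕ}

/-- The cumulative-sum linear map `t ↦ (j ↦ ∑_{i ≤ j} t i)`. -/
noncomputable def cumsum (n : ℕ) : (Fin n → ℝ) →ₗ[ℝ] (Fin n → ℝ) where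
  toFun t := fun j => ∑ i ∈ Finset.Iic j, t i
  map_add' t s := by
    funext j
    simp [Finset.sum_add_distrib]
  map_smul' r t := by
    funext j
    simp [Finset.mul_sum]

lemma cumsum_apply (t : Fin n → ℝ) (j : Fin n) :
    cumsum n t j = ∑ i ∈ Finset.Iic j, t i := rfl

lemma cumsum_det : LinearMap.det (cumsum n) = 1 := by
  rw [← LinearMap.det_toMatrix']
  have htri : (LinearMap.toMatrix' (cumsum n)).BlockTriangular OrderDual.toDual := by
    intro i j hij
    simp only [LinearMap.toMatrix'_apply, cumsum_apply, Pi.single_apply]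
    rw [Finset.sum_ite_eq' (Finset.Iic i) j fun _ => (1 : ℝ)]
    simp only [Finset.mem_Iic, if_neg (fun h : j ≤ i => absurd h (not_le.mpr hij))]
  rw [Matrix.det_of_lowerTriangular _ htri]
  apply Finset.prod_eq_one
  intro i _
  simp only [LinearMap.toMatrix'_apply, cumsum_apply, Pi.single_apply]
  rw [Finset.sum_ite_eq' (Finset.Iic i) i fun _ => (1 : ℝ)]
  simp

lemma cumsum_measurePreserving :
    MeasurePreserving (cumsum n) (volume : Measure (Fin n → ℝ)) volume := by
  refine ⟨(cumsum n).continuous_of_finiteDimensional.measurable, ?_⟩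
  rw [Real.map_linearMap_volume_pi_eq_smul_volume_pi (by rw [cumsum_det]; norm_num),
    cumsum_det]
  simp

lemma cumsum_preimage :
    (cumsum n) ⁻¹' {y : Fin n → ℝ | (∀ i, 0 < y i) ∧ StrictMono y} =
      Set.pi Set.univ fun _ : Fin n => Set.Ioi (0 : ℝ) := by
  cases n with
  | zero =>
    ext t
    simp only [Set.mem_preimage, Set.mem_setOf_eq, Set.mem_pi, Set.mem_univ, forall_true_left]
    constructor
    · intro _ i; exact i.elim0
    · intro _
      exact ⟨fun i => i.elim0, Subsingleton.strictMono _⟩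
  | succ n =>
    have hdiff : ∀ (t : Fin (n + 1) → ℝ) (j : Fin n),
        cumsum (n + 1) t j.succ = cumsum (n + 1) t j.castSucc + t j.succ := by
      intro t j
      simp only [cumsum_apply]
      have : Finset.Iic j.succ = insert j.succ (Finset.Iic j.castSucc) := by
        ext k
        simp only [Finset.mem_Iic, Finset.mem_insert, Fin.le_def, Fin.ext_iff,
          Fin.val_succ, Fin.coe_castSucc]
        omega
      rw [this, Finset.sum_insert (by simp [Fin.le_castSucc_iff])]
      ring
    ext t
    constructor
    · rintro ⟨hpos, hmono⟩ i _
      simp only [Set.mem_Ioi]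
      rcases Fin.eq_zero_or_eq_succ i with hi | ⟨j, rfl⟩
      · subst hi
        have := hpos 0
        have h0 : Finset.Iic (0 : Fin (n + 1)) = {0} := by
          ext k
          simp only [Finset.mem_Iic, Finset.mem_singleton, Fin.le_def, Fin.ext_iff, Fin.val_zero]; omega
        simpa [cumsum_apply, h0] using this
      · have h := hmono (Fin.castSucc_lt_succ (i := j))
        rw [hdiff t j] at h
        linarith
    · intro ht
      have ht' : ∀ i, 0 < t i := fun i => ht i (Set.mem_univ i)
      constructor
      · intro i
        simp only [cumsum_apply]
        exact Finset.sum_pos (fun k _ => ht' k) ⟨i, Finset.mem_Iic.2 le_rfl⟩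
      · refine Fin.strictMono_iff_lt_succ.2 fun j => ?_
        rw [hdiff t j]
        linarith [ht' j.succ]

lemma sum_swap_cumsum (c t : Fin n → ℝ) :
    ∑ j, c j * (cumsum n t j) = ∑ i, (∑ j ∈ Finset.Ici i, c j) * t i := by
  simp only [cumsum_apply, Finset.mul_sum, Finset.sum_mul]
  have h1 : ∀ j : Fin n, Finset.Iic j = Finset.univ.filter (· ≤ j) := by
    intro j; ext k; simp
  have h2 : ∀ i : Fin n, Finset.Ici i = Finset.univ.filter (i ≤ ·) := by
    intro i; ext k; simp
  simp only [h1, h2, Finset.sum_filter]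
  rw [Finset.sum_comm]

lemma integral_exp_neg_mul_Ioi_zero {d : ℝ} (hd : 0 < d) :
    ∫ x in Set.Ioi (0 : ℝ), Real.exp (-(d * x)) = d⁻¹ := by
  have := integral_comp_mul_left_Ioi (fun x => Real.exp (-x)) 0 hd
  simp only [mul_zero, smul_eq_mul] at this
  rw [show (fun x => Real.exp (-(d * x))) = fun x => Real.exp (-(d * x)) from rfl]
  calc ∫ x in Set.Ioi (0 : ℝ), Real.exp (-(d * x))
      = d⁻¹ * ∫ x in Set.Ioi (0 : ℝ), Real.exp (-x) := this
    _ = d⁻¹ := by rw [integral_exp_neg_Ioi_zero, mul_one]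

lemma setIntegral_pi_Ioi (f : Fin n → ℝ → ℝ) (hf : ∀ i, Measurable (f i)) :
    ∫ x in Set.pi Set.univ (fun _ : Fin n => Set.Ioi (0 : ℝ)), ∏ i, f i (x i) =
      ∏ i, ∫ x in Set.Ioi (0 : ℝ), f i x := by
  have hms : MeasurableSet (Set.pi Set.univ fun _ : Fin n => Set.Ioi (0 : ℝ)) :=
    MeasurableSet.univ_pi fun _ => measurableSet_Ioi
  rw [← integral_indicator hms]
  have hind : ∀ x : Fin n → ℝ,
      (Set.pi Set.univ fun _ : Fin n => Set.Ioi (0 : ℝ)).indicator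
        (fun x => ∏ i, f i (x i)) x =
      ∏ i, (Set.Ioi (0 : ℝ)).indicator (f i) (x i) := by
    intro x
    by_cases hx : x ∈ Set.pi Set.univ fun _ : Fin n => Set.Ioi (0 : ℝ)
    · rw [Set.indicator_of_mem hx]
      exact Finset.prod_congr rfl fun i _ =>
        (Set.indicator_of_mem (hx i (Set.mem_univ i)) (f i)).symm
    · rw [Set.indicator_of_notMem hx]
      simp only [Set.mem_pi, Set.mem_univ, forall_true_left, not_forall] at hx
      obtain ⟨i, hi⟩ := hx
      exact (Finset.prod_eq_zero (Finset.mem_univ i)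
        (Set.indicator_of_notMem (by simpa using hi) (f i))).symm
  simp_rw [hind]
  rw [integral_fintype_prod_volume_eq_prod (ι := Fin n) fun i => (Set.Ioi (0 : ℝ)).indicator (f i)]
  exact Finset.prod_congr rfl fun i _ => integral_indicator measurableSet_Ioi

end aux

/-- For positive reals `c_1, …, c_n`, the integral of
`exp(-c_1 y_1 - ⋯ - c_n y_n)` over the open simplex `{0 < y_1 < y_2 < ⋯ < y_n}`
equals `∏_{j=1}^n 1/(∑_{i=j}^n c_i)`. -/
theorem stmt10 (n : ℕ) (hn : 0 < n) (c : Fin n → ℝ) (hc : ∀ i, 0 < c i) :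
    ∫ y in {y : Fin n → ℝ | (∀ i, 0 < y i) ∧ StrictMono y},
        Real.exp (-∑ i, c i * y i) =
      ∏ j : Fin n, (∑ i ∈ Finset.Ici j, c i)⁻¹ := by
  -- change of variables via the cumulative sum map
  have hdet : LinearMap.det (cumsum n) ≠ 0 := by rw [cumsum_det]; norm_num
  have hemb : MeasurableEmbedding (cumsum n) := by
    let e := ((cumsum n).equivOfDetNeZero hdet).toContinuousLinearEquiv
    have : (cumsum n : (Fin n → ℝ) → (Fin n → ℝ)) = e := rfl
    rw [this]
    exact e.toHomeomorph.measurableEmbedding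
  rw [← cumsum_measurePreserving.setIntegral_preimage_emb hemb
    (fun y => Real.exp (-∑ i, c i * y i)) _]
  rw [cumsum_preimage]
  have hrw : ∀ t : Fin n → ℝ,
      Real.exp (-∑ i, c i * (cumsum n t i)) =
        ∏ i, Real.exp (-((∑ j ∈ Finset.Ici i, c j) * t i)) := by
    intro t
    rw [sum_swap_cumsum c t, ← Real.exp_sum]
    congr 1
    rw [← Finset.sum_neg_distrib]
  simp_rw [hrw]
  rw [setIntegral_pi_Ioi (fun i x => Real.exp (-((∑ j ∈ Finset.Ici i, c j) * x)))
    (fun i => by fun_prop)]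
  refine Finset.prod_congr rfl fun i _ => ?_
  exact integral_exp_neg_mul_Ioi_zero
    (Finset.sum_pos (fun j _ => hc j) ⟨i, Finset.mem_Ici.2 le_rfl⟩)
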